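/- A line l with foot of perpendicular p from the origin o intersects the closed segment from o to the point q = (R cos φ', R sin φ') if and only if p lies in the closed disk of diameter R centered at the midpoint of o and q (i.e., the disk with o and q as antipodal boundary points), excluding the degenerate case p = o. -/

import Mathlib

open Real

/-- The plane ℝ² with the Euclidean metric. -/
abbrev E := EuclideanSpace ℝ (Fin 2)

/-- The point of E with given coordinates. -/
noncomputable def pt (a b : ℝ) : E := (WithLp.equiv 2 (Fin 2 → ℝ)).symm ![a, b]

/-- The line whose foot of perpendicular from the origin is p (p ≠ 0). -/
def lineOf (p : E) : Set E := {z | (inner ℝ z p : ℝ) = (inner ℝ p p : ℝ)}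

/-- A line with foot of perpendicular `p ≠ o` from the origin `o` intersects the closed
segment from `o` to `q = (R cos φ', R sin φ')` iff `p` lies in the closed disk having
`o` and `q` as antipodal boundary points. -/
theorem stmt1 (R φ' : ℝ) (hR : 0 < R) (p : E) (hp : p ≠ 0) :
    (lineOf p ∩ segment ℝ (0 : E) (pt (R * cos φ') (R * sin φ'))).Nonempty ↔
      p ∈ Metric.closedBall ((1 / 2 : ℝ) • pt (R * cos φ') (R * sin φ')) (R / 2) := by
  set q : E := pt (R * cos φ') (R * sin φ') with hqdef
  have hqq : (inner ℝ q q : ℝ) = R ^ 2 := by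
    have h := sin_sq_add_cos_sq φ'
    simp [hqdef, pt, EuclideanSpace.inner_eq_star_dotProduct, EuclideanSpace.real_norm_sq_eq, Fin.sum_univ_two]
    nlinarith
  have hpp : (0:ℝ) < inner ℝ p p := by
    have h0 : (0:ℝ) < ‖p‖ := norm_pos_iff.mpr hp
    rw [real_inner_self_eq_norm_sq]
    positivity
  have hns : ‖p - (1/2:ℝ) • q‖ ^ 2 = (inner ℝ p p : ℝ) - inner ℝ p q + R ^ 2 / 4 := by
    rw [← real_inner_self_eq_norm_sq]
    simp only [inner_sub_left, inner_sub_right, real_inner_smul_left, real_inner_smul_right,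
      real_inner_comm q p]
    rw [hqq]; ring
  have key : p ∈ Metric.closedBall ((1/2:ℝ) • q) (R/2) ↔ (inner ℝ p p : ℝ) ≤ inner ℝ p q := by
    rw [Metric.mem_closedBall, dist_eq_norm]
    constructor
    · intro h
      have h2 : ‖p - (1/2:ℝ) • q‖ ^ 2 ≤ (R/2) ^ 2 := by
        have := norm_nonneg (p - (1/2:ℝ) • q); nlinarith
      nlinarith
    · intro h
      have h2 : ‖p - (1/2:ℝ) • q‖ ^ 2 ≤ (R/2) ^ 2 := by rw [hns]; nlinarith
      have := norm_nonneg (p - (1/2:ℝ) • q); nlinarith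
  rw [key]
  constructor
  · rintro ⟨z, hzl, hzs⟩
    rw [segment_eq_image] at hzs
    obtain ⟨t, ⟨ht0, ht1⟩, htz⟩ := hzs
    simp only [smul_zero, zero_add] at htz
    have hzl' : (t : ℝ) * inner ℝ q p = inner ℝ p p := by
      have h : (inner ℝ z p : ℝ) = inner ℝ p p := hzl
      rw [← htz, real_inner_smul_left] at h
      exact h
    have hc : (inner ℝ p q : ℝ) = inner ℝ q p := real_inner_comm q p
    have ht0' : (0:ℝ) < t := by nlinarith
    have hiq : (0:ℝ) < inner ℝ q p := by nlinarith
    nlinarith [mul_le_mul_of_nonneg_right ht1 hiq.le]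
  · intro h
    have hq0 : (0:ℝ) < inner ℝ p q := lt_of_lt_of_le hpp h
    set t : ℝ := (inner ℝ p p : ℝ) / inner ℝ p q with ht
    refine ⟨t • q, ?_, ?_⟩
    · show (inner ℝ (t • q) p : ℝ) = inner ℝ p p
      have hc : (inner ℝ q p : ℝ) = inner ℝ p q := real_inner_comm p q
      rw [real_inner_smul_left, hc, ht]
      exact div_mul_cancel₀ _ hq0.ne'
    · rw [segment_eq_image]
      refine ⟨t, ⟨by positivity, ?_⟩, by simp⟩
      rw [ht, div_le_one hq0]; exact h
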